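/- Schur–Horn (easy direction): for any Hermitian matrix H ∈ M_d(ℂ) and any unitary U ∈ M_d(ℂ), the vector of diagonal entries of U H U† is majorized by the vector of eigenvalues of H. -/
import Mathlib


open Matrix

/-- `p` majorizes `q`: for every `k`, the sum of the `k` largest entries of `p`
is at least the sum of the `k` largest entries of `q` (expressed via subsets),
and the total sums agree. -/
def Majorizes {α β : Type*} [Fintype α] [Fintype β] (p : α → ℝ) (q : β → ℝ) : Prop :=
  (∀ s : Finset β, ∃ t : Finset α, t.card = s.card ∧ ∑ i ∈ s, q i ≤ ∑ i ∈ t, p i) ∧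
  ∑ i, p i = ∑ i, q i

/-- Key combinatorial lemma: if `0 ≤ c j ≤ 1` and `∑ c j = k` with `k ≤ d`, then
`∑ c j * l j` is at most the sum of the `k` largest values of `l`. -/
lemma exists_subset_sum_le {d : ℕ} (l c : Fin d → ℝ) (hc0 : ∀ j, 0 ≤ c j)
    (hc1 : ∀ j, c j ≤ 1) (k : ℕ) (hk : k ≤ d) (hsum : ∑ j, c j = k) :
    ∃ t : Finset (Fin d), t.card = k ∧ ∑ j, c j * l j ≤ ∑ j ∈ t, l j := by
  classical
  rcases Nat.eq_zero_or_pos k with rfl | hkpos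
  · refine ⟨∅, by simp, ?_⟩
    have : ∀ j, c j = 0 := by
      intro j
      have := (Finset.sum_eq_zero_iff_of_nonneg (fun i _ => hc0 i)).mp (by simpa using hsum)
      exact this j (Finset.mem_univ j)
    simp [this]
  -- choose a maximizing subset of cardinality k
  have hne : (Finset.univ.powersetCard k : Finset (Finset (Fin d))).Nonempty := by
    obtain ⟨t, _, ht⟩ := Finset.exists_subset_card_eq (by simpa using hk :
      k ≤ (Finset.univ : Finset (Fin d)).card)
    exact ⟨t, by simp [Finset.mem_powersetCard, ht]⟩
  obtain ⟨t, htmem, htmax⟩ := Finset.exists_max_image _ (fun t => ∑ j ∈ t, l j) hne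
  have htcard : t.card = k := (Finset.mem_powersetCard.mp htmem).2
  have htne : t.Nonempty := Finset.card_pos.mp (htcard ▸ hkpos)
  -- the threshold
  set m : ℝ := t.inf' htne l with hm
  have hmem_le : ∀ j ∈ t, m ≤ l j := fun j hj => Finset.inf'_le _ hj
  have hout_le : ∀ j ∉ t, l j ≤ m := by
    intro j hj
    obtain ⟨j0, hj0, hj0m⟩ := Finset.exists_mem_eq_inf' htne l
    by_contra hlt
    push_neg at hlt
    -- swap j0 for j increases the sum, contradiction
    have hcard' : (insert j (t.erase j0)).card = k := by
      rw [Finset.card_insert_of_notMem (fun h => hj (Finset.mem_of_mem_erase h)),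
        Finset.card_erase_of_mem hj0, htcard]
      omega
    have hmem' : insert j (t.erase j0) ∈ Finset.univ.powersetCard k := by
      simp [Finset.mem_powersetCard, hcard']
    have := htmax _ hmem'
    rw [Finset.sum_insert (fun h => hj (Finset.mem_of_mem_erase h)),
      ← Finset.add_sum_erase t l hj0] at this
    have : l j ≤ l j0 := by linarith
    rw [hm, hj0m] at hlt; linarith
  refine ⟨t, htcard, ?_⟩
  -- main estimate
  have hsplit : ∑ j, c j * l j = ∑ j ∈ t, c j * l j + ∑ j ∈ tᶜ, c j * l j :=
    (Finset.sum_add_sum_compl t _).symm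
  have h1 : ∑ j ∈ t, c j * l j ≤ ∑ j ∈ t, (l j - (1 - c j) * m) := by
    apply Finset.sum_le_sum
    intro j hj
    have := hmem_le j hj
    nlinarith [hc1 j, hc0 j]
  have h2 : ∑ j ∈ tᶜ, c j * l j ≤ ∑ j ∈ tᶜ, c j * m := by
    apply Finset.sum_le_sum
    intro j hj
    have := hout_le j (by simpa using hj)
    nlinarith [hc0 j]
  have hcsum : ∑ j ∈ t, c j + ∑ j ∈ tᶜ, c j = (k : ℝ) := by
    rw [Finset.sum_add_sum_compl t c, hsum]
  have : ∑ j ∈ t, (l j - (1 - c j) * m) + ∑ j ∈ tᶜ, c j * m = ∑ j ∈ t, l j := by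
    simp only [Finset.sum_sub_distrib, sub_mul, one_mul, ← Finset.sum_mul]
    rw [Finset.sum_const, htcard, nsmul_eq_mul]
    linear_combination m * hcsum
  linarith
/-- **Schur–Horn, easy direction.** The diagonal of `U H U†` is majorized by
the vector of eigenvalues of the Hermitian matrix `H`. -/
theorem schur_horn_diag_majorized {d : ℕ} (H U : Matrix (Fin d) (Fin d) ℂ)
    (hH : H.IsHermitian) (hU : U ∈ Matrix.unitaryGroup (Fin d) ℂ) :
    Majorizes hH.eigenvalues (fun i => ((U * H * Uᴴ) i i).re) := by
  classical
  set V : Matrix (Fin d) (Fin d) ℂ := (hH.eigenvectorUnitary : Matrix (Fin d) (Fin d) ℂ)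
  set W : Matrix (Fin d) (Fin d) ℂ := U * V with hW
  have hVU : V ∈ Matrix.unitaryGroup (Fin d) ℂ := hH.eigenvectorUnitary.2
  have hWU : W ∈ Matrix.unitaryGroup (Fin d) ℂ := mul_mem hU hVU
  set s : Fin d → Fin d → ℝ := fun i j => Complex.normSq (W i j) with hs
  -- diagonal entries as convex combinations of eigenvalues
  have hkey : V * Matrix.diagonal (RCLike.ofReal ∘ hH.eigenvalues) * Vᴴ = H := by
    rw [← Matrix.star_eq_conjTranspose]
    exact hH.spectral_theorem.symm
  have hUHU : U * H * Uᴴ = W * Matrix.diagonal (RCLike.ofReal ∘ hH.eigenvalues) * Wᴴ := by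
    have h2 : W * Matrix.diagonal (RCLike.ofReal ∘ hH.eigenvalues) * Wᴴ
        = U * (V * Matrix.diagonal (RCLike.ofReal ∘ hH.eigenvalues) * Vᴴ) * Uᴴ := by
      rw [hW, Matrix.conjTranspose_mul]
      noncomm_ring
    rw [h2, hkey]
  have hdiag : ∀ i, ((U * H * Uᴴ) i i).re = ∑ j, s i j * hH.eigenvalues j := by
    intro i
    rw [hUHU, Matrix.mul_apply, Complex.re_sum]
    refine Finset.sum_congr rfl fun j _ => ?_
    rw [Matrix.mul_diagonal, Matrix.conjTranspose_apply]
    have : W i j * (RCLike.ofReal ∘ hH.eigenvalues) j * star (W i j)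
        = ((s i j * hH.eigenvalues j : ℝ) : ℂ) := by
      simp only [Function.comp_apply, RCLike.ofReal, Complex.coe_algebraMap,
        Complex.star_def, hs]
      rw [mul_comm (W i j), mul_assoc, Complex.mul_conj]
      push_cast
      ring
    rw [this, Complex.ofReal_re]
  have hs0 : ∀ i j, 0 ≤ s i j := fun i j => Complex.normSq_nonneg _
  -- row sums are 1
  have hrow : ∀ i, ∑ j, s i j = 1 := by
    intro i
    have h1 : W * Wᴴ = 1 := by
      rw [← Matrix.star_eq_conjTranspose]
      exact (Matrix.mem_unitaryGroup_iff).mp hWU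
    have h2 : ((W * Wᴴ) i i).re = 1 := by rw [h1]; simp [Matrix.one_apply]
    rw [Matrix.mul_apply, Complex.re_sum] at h2
    rw [← h2]
    refine Finset.sum_congr rfl fun j _ => ?_
    rw [Matrix.conjTranspose_apply, Complex.star_def, Complex.mul_conj, Complex.ofReal_re]
  -- column sums are 1
  have hcol : ∀ j, ∑ i, s i j = 1 := by
    intro j
    have h1 : Wᴴ * W = 1 := by
      rw [← Matrix.star_eq_conjTranspose]
      exact (Matrix.mem_unitaryGroup_iff').mp hWU
    have h2 : ((Wᴴ * W) j j).re = 1 := by rw [h1]; simp [Matrix.one_apply]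
    rw [Matrix.mul_apply, Complex.re_sum] at h2
    rw [← h2]
    refine Finset.sum_congr rfl fun i _ => ?_
    rw [Matrix.conjTranspose_apply, Complex.star_def, mul_comm, Complex.mul_conj,
      Complex.ofReal_re]
  have hs1 : ∀ i j, s i j ≤ 1 := by
    intro i j
    rw [← hrow i]
    exact Finset.single_le_sum (fun k _ => hs0 i k) (Finset.mem_univ j)
  constructor
  · intro S
    set c : Fin d → ℝ := fun j => ∑ i ∈ S, s i j with hc
    have hc0 : ∀ j, 0 ≤ c j := fun j => Finset.sum_nonneg fun i _ => hs0 i j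
    have hc1 : ∀ j, c j ≤ 1 := by
      intro j
      have h := Finset.sum_le_sum_of_subset_of_nonneg (Finset.subset_univ S)
        (fun i _ _ => hs0 i j)
      calc c j ≤ ∑ i, s i j := h
        _ = 1 := hcol j
    have hcsum : ∑ j, c j = (S.card : ℝ) := by
      rw [hc]
      rw [Finset.sum_comm]
      simp [hrow]
    have hkd : S.card ≤ d := by simpa using Finset.card_le_card (Finset.subset_univ S)
    obtain ⟨t, htc, hle⟩ := exists_subset_sum_le hH.eigenvalues c hc0 hc1 S.card hkd hcsum
    refine ⟨t, htc, ?_⟩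
    calc ∑ i ∈ S, ((U * H * Uᴴ) i i).re = ∑ i ∈ S, ∑ j, s i j * hH.eigenvalues j := by
          exact Finset.sum_congr rfl fun i _ => hdiag i
      _ = ∑ j, c j * hH.eigenvalues j := by
          rw [Finset.sum_comm]; simp [hc, Finset.sum_mul]
      _ ≤ ∑ j ∈ t, hH.eigenvalues j := hle
  · calc ∑ j, hH.eigenvalues j = ∑ j, (∑ i, s i j) * hH.eigenvalues j := by simp [hcol]
      _ = ∑ i, ∑ j, s i j * hH.eigenvalues j := by
          rw [Finset.sum_comm]; simp [Finset.sum_mul]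
      _ = ∑ i, ((U * H * Uᴴ) i i).re := by
          exact Finset.sum_congr rfl fun i _ => (hdiag i).symm
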